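/- Let K be a field of characteristic ≠ 2 and A, B ∈ K nonzero with C = A + B ≠ 0. If X, Y ∈ K with Y ≠ 0 satisfy Y² = X(X − A)(X + B), then a = (X² + (B−A)X − AB)/Y, b = CX/Y, c = (X² + AB)/Y satisfy a² − 2ab·cosθ + b² = c², where cosθ = (B − A)/C, and (ab·sinθ)² = 4AB where sinθ satisfies sin²θ + cos²θ = 1 with sinθ = 2√(AB)/C (i.e., (ab)²(1 − ((B−A)/C)²) = 4AB). -/

import Mathlib

theorem frey_curve_to_triangle (K : Type*) [Field K] (h2 : (2 : K) ≠ 0)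
    (A B : K) (hA : A ≠ 0) (hB : B ≠ 0) (hC : A + B ≠ 0)
    (X Y : K) (hY : Y ≠ 0) (h : Y ^ 2 = X * (X - A) * (X + B)) :
    ((X ^ 2 + (B - A) * X - A * B) / Y) ^ 2 -
        2 * ((X ^ 2 + (B - A) * X - A * B) / Y) * ((A + B) * X / Y) * ((B - A) / (A + B)) +
        ((A + B) * X / Y) ^ 2 = ((X ^ 2 + A * B) / Y) ^ 2 ∧
      (((X ^ 2 + (B - A) * X - A * B) / Y) * ((A + B) * X / Y)) ^ 2 *
          (1 - ((B - A) / (A + B)) ^ 2) = 4 * (A * B) := by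
  constructor
  · have key : B * Y ^ 6 + A * Y ^ 6 = (A + B) * Y ^ 6 := by ring
    have hne : (A + B) * Y ^ 6 ≠ 0 := mul_ne_zero hC (pow_ne_zero _ hY)
    field_simp
    ring_nf
  · field_simp
    linear_combination (-4*A*B*(Y^2 + X*(X-A)*(X+B))) * h
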